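/- Let S ⊆ ℝⁿ be any set, let c₁, …, c_K ∈ ℝⁿ be a finite family of vectors, and let d ∈ ℝⁿ be a nonnegative linear combination of the c_k, i.e. d = Σ_{k=1}^K a_k c_k with all a_k ≥ 0. Then the efficient set of the extended family (c₁, …, c_K, d) over S equals the efficient set of the family (c₁, …, c_K) over S. -/
import Mathlib


open Matrix

/-- A point `x` is efficient (Pareto optimal) for the family of linear objectives
`y ↦ c k ⬝ᵥ y` over `S` if `x ∈ S` and no `y ∈ S` dominates it. -/
def Efficient {n K : ℕ} (S : Set (Fin n → ℝ)) (c : Fin K → (Fin n → ℝ))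
    (x : Fin n → ℝ) : Prop :=
  x ∈ S ∧ ¬ ∃ y ∈ S, (∀ k, c k ⬝ᵥ x ≤ c k ⬝ᵥ y) ∧ ∃ k₀, c k₀ ⬝ᵥ x < c k₀ ⬝ᵥ y

lemma d_dot {n K : ℕ} (a : Fin K → ℝ) (c : Fin K → (Fin n → ℝ)) (x : Fin n → ℝ) :
    (∑ k, a k • c k) ⬝ᵥ x = ∑ k, a k * (c k ⬝ᵥ x) := by
  simp only [dotProduct, Finset.sum_apply, Pi.smul_apply, smul_eq_mul,
    Finset.sum_mul, Finset.mul_sum]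
  rw [Finset.sum_comm]
  congr 1; ext k; congr 1; ext i; ring

/-- Adjoining a nonnegative linear combination of the objectives does not change
the efficient set. -/
theorem efficient_snoc_nonneg_combination {n K : ℕ} (S : Set (Fin n → ℝ))
    (c : Fin K → (Fin n → ℝ)) (d : Fin n → ℝ)
    (hd : ∃ a : Fin K → ℝ, (∀ k, 0 ≤ a k) ∧ d = ∑ k, a k • c k) :
    {x | Efficient S (Fin.snoc c d) x} = {x | Efficient S c x} := by
  obtain ⟨a, ha, hdef⟩ := hd
  ext x
  simp only [Set.mem_setOf_eq, Efficient]
  constructor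
  · rintro ⟨hxS, hno⟩
    refine ⟨hxS, fun ⟨y, hyS, hle, k₀, hlt⟩ => ?_⟩
    apply hno
    refine ⟨y, hyS, ?_, ⟨k₀.castSucc, by simpa using hlt⟩⟩
    intro k
    refine Fin.lastCases ?_ ?_ k
    · simp only [Fin.snoc_last]
      rw [hdef, d_dot, d_dot]
      exact Finset.sum_le_sum fun k _ => mul_le_mul_of_nonneg_left (hle k) (ha k)
    · intro i; simpa using hle i
  · rintro ⟨hxS, hno⟩
    refine ⟨hxS, fun ⟨y, hyS, hle, k₀, hlt⟩ => ?_⟩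
    apply hno
    have hle' : ∀ k, c k ⬝ᵥ x ≤ c k ⬝ᵥ y := fun k => by simpa using hle k.castSucc
    refine ⟨y, hyS, hle', ?_⟩
    refine Fin.lastCases ?_ (fun i hi => ⟨i, by simpa using hi⟩) k₀ hlt
    · intro hlt
      simp only [Fin.snoc_last] at hlt
      rw [hdef, d_dot, d_dot] at hlt
      by_contra hcon
      push_neg at hcon
      exact absurd (Finset.sum_le_sum fun k _ =>
        mul_le_mul_of_nonneg_left (hcon k) (ha k)) (not_le.2 hlt)
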